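/- Let G be a connected {house, hole}-free graph with no universal edge. Then every edge of G lies in a triangle. -/

import Mathlib

open SimpleGraph

variable {V : Type*}

/-- The interval between two vertices: vertices on some shortest path. -/
def interval (G : SimpleGraph V) (x y : V) : Set V :=
  {z | G.dist x y = G.dist x z + G.dist z y}

/-- The line generated by two vertices. -/
def line (G : SimpleGraph V) (x y : V) : Set V :=
  {z | z ∈ interval G x y ∨ x ∈ interval G z y ∨ y ∈ interval G x z}

/-- The house graph: a 5-cycle 0-1-2-3-4-0 plus the chord 1-4. -/
def house : SimpleGraph (Fin 5) :=
  SimpleGraph.fromEdgeSet {s(0,1), s(1,2), s(2,3), s(3,4), s(4,0), s(1,4)}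

/-- A graph is {house, hole}-free if it has no induced house and no induced
cycle of length at least 5. -/
def HHFree (G : SimpleGraph V) : Prop :=
  IsEmpty (house ↪g G) ∧ ∀ n, 5 ≤ n → IsEmpty (cycleGraph n ↪g G)

/-- A graph is hole-free if it has no induced cycle of length at least 5. -/
def HoleFree (G : SimpleGraph V) : Prop :=
  ∀ n, 5 ≤ n → IsEmpty (cycleGraph n ↪g G)

/-- A good pair: two vertices at distance 2 with a common neighbour `c`
such that `line u c = line c v`. -/
def GoodPair (G : SimpleGraph V) (u v : V) : Prop :=
  G.dist u v = 2 ∧ ∃ c, G.Adj u c ∧ G.Adj c v ∧ line G u c = line G c v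

/-- The set of all lines of a graph (generated by pairs of distinct vertices). -/
def lineSet (G : SimpleGraph V) : Set (Set V) :=
  {ℓ | ∃ u v : V, u ≠ v ∧ line G u v = ℓ}

lemma fin_sub_val_eq_one {m : ℕ} (u v : Fin (m+2)) :
    (u - v).val = 1 ↔ (u.val = v.val + 1 ∨ (v.val = m + 1 ∧ u.val = 0)) := by
  have hu := u.isLt
  have hv := v.isLt
  rw [Fin.sub_def]
  simp only
  rcases lt_or_ge u.val v.val with h | h
  · rw [Nat.mod_eq_of_lt (by omega)]; omega
  · have he : (m + 2 - v.val + u.val) = (m+2) + (u.val - v.val) := by omega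
    rw [he, Nat.add_mod_left, Nat.mod_eq_of_lt (by omega)]
    omega

lemma cycle_embed (G : SimpleGraph V) (m : ℕ) (f : ℕ → V)
    (hinj : ∀ s, s < m+2 → ∀ t, t < m+2 → f s = f t → s = t)
    (hadj : ∀ t, t + 1 < m+2 → G.Adj (f t) (f (t+1)))
    (hwrap : G.Adj (f (m+1)) (f 0))
    (hconv : ∀ s t, s < t → t < m+2 → G.Adj (f s) (f t) → t = s + 1 ∨ (s = 0 ∧ t = m+1)) :
    Nonempty (cycleGraph (m+2) ↪g G) := by
  refine ⟨⟨⟨fun i => f i.val, ?_⟩, ?_⟩⟩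
  · intro a b hab
    exact Fin.ext (hinj _ a.isLt _ b.isLt hab)
  · intro a b
    have ha := a.isLt
    have hb := b.isLt
    show G.Adj (f a.val) (f b.val) ↔ (cycleGraph (m+2)).Adj a b
    rw [cycleGraph_adj]
    simp only [Fin.ext_iff, Fin.val_one, fin_sub_val_eq_one]
    constructor
    · intro h
      have hne : a.val ≠ b.val := fun he => G.irrefl (he ▸ h)
      rcases lt_or_gt_of_ne hne with hlt | hlt
      · rcases hconv a.val b.val hlt hb h with h1 | ⟨h1, h2⟩
        · omega
        · omega
      · rcases hconv b.val a.val hlt ha h.symm with h1 | ⟨h1, h2⟩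
        · omega
        · omega
    · rintro ((h | ⟨h1, h2⟩) | (h | ⟨h1, h2⟩))
      · rw [h]; exact (hadj b.val (by omega)).symm
      · rw [h1, h2]; exact hwrap.symm
      · rw [h]; exact hadj a.val (by omega)
      · rw [h1, h2]; exact hwrap

lemma house_adj_explicit (a b : Fin 5) : house.Adj a b ↔
    ((a,b) = (0,1) ∨ (a,b) = (1,0) ∨ (a,b) = (1,2) ∨ (a,b) = (2,1) ∨ (a,b) = (2,3) ∨
     (a,b) = (3,2) ∨ (a,b) = (3,4) ∨ (a,b) = (4,3) ∨ (a,b) = (4,0) ∨ (a,b) = (0,4) ∨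
     (a,b) = (1,4) ∨ (a,b) = (4,1)) := by
  simp only [house, fromEdgeSet_adj, Set.mem_insert_iff, Set.mem_singleton_iff, Sym2.eq_iff,
    Prod.mk.injEq, ne_eq]
  fin_cases a <;> fin_cases b <;> decide
set_option maxHeartbeats 1600000 in
lemma core (G : SimpleGraph V) (hG : G.Connected) (hH : HHFree G)
    (K : ℕ) (x y : ℕ → V)
    (hxa : ∀ i < K+2, G.Adj (x i) (x (i+1)))
    (hya : ∀ i < K+2, G.Adj (y i) (y (i+1)))
    (htop : x (K+2) = y (K+2))
    (hdx : ∀ i ≤ K+2, G.dist (x 0) (x i) = i)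
    (hdy : ∀ i ≤ K+2, G.dist (y 0) (y i) = i)
    (hdyx0 : ∀ i < K+2, G.dist (y 0) (x i) = i + 1)
    (hdxy0 : ∀ i < K+2, G.dist (x 0) (y i) = i + 1)
    (hxy0 : G.Adj (x 0) (y 0)) : False := by
  classical
  have hb : ∀ (w a b : V), G.Adj a b → G.dist w a ≤ G.dist w b + 1 := by
    intro w a b h
    have h1 : G.dist w a ≤ G.dist w b + G.dist b a := hG.dist_triangle
    have h2 : G.dist b a = 1 := dist_eq_one_iff_adj.mpr h.symm
    omega
  have hdyx : ∀ i ≤ K+2, G.dist (y 0) (x i) = if i < K+2 then i + 1 else K+2 := by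
    intro i hi
    rcases lt_or_eq_of_le hi with h | h
    · rw [if_pos h]; exact hdyx0 i h
    · rw [if_neg (by omega), h, htop]; exact hdy (K+2) le_rfl
  have hdxy : ∀ i ≤ K+2, G.dist (x 0) (y i) = if i < K+2 then i + 1 else K+2 := by
    intro i hi
    rcases lt_or_eq_of_le hi with h | h
    · rw [if_pos h]; exact hdxy0 i h
    · rw [if_neg (by omega), h, ← htop]; exact hdx (K+2) le_rfl
  have xinj : ∀ i ≤ K+2, ∀ j ≤ K+2, x i = x j → i = j := by
    intro i hi j hj h
    have h1 := hdx i hi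
    rw [h, hdx j hj] at h1
    omega
  have yinj : ∀ i ≤ K+2, ∀ j ≤ K+2, y i = y j → i = j := by
    intro i hi j hj h
    have h1 := hdy i hi
    rw [h, hdy j hj] at h1
    omega
  have xyne : ∀ i ≤ K+2, ∀ j ≤ K+2, x i = y j → i = K+2 ∧ j = K+2 := by
    intro i hi j hj h
    have h1 := hdyx i hi
    rw [h, hdy j hj] at h1
    have h2 := hdxy j hj
    rw [← h, hdx i hi] at h2
    split_ifs at h1 h2 <;> omega
  have xnadj : ∀ i ≤ K+2, ∀ j ≤ K+2, G.Adj (x i) (x j) → (j = i+1 ∨ i = j+1) := by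
    intro i hi j hj h
    have h1 := hb (x 0) _ _ h
    have h2 := hb (x 0) _ _ h.symm
    rw [hdx i hi, hdx j hj] at h1 h2
    have hne : i ≠ j := fun he => G.irrefl (he ▸ h)
    omega
  have ynadj : ∀ i ≤ K+2, ∀ j ≤ K+2, G.Adj (y i) (y j) → (j = i+1 ∨ i = j+1) := by
    intro i hi j hj h
    have h1 := hb (y 0) _ _ h
    have h2 := hb (y 0) _ _ h.symm
    rw [hdy i hi, hdy j hj] at h1 h2
    have hne : i ≠ j := fun he => G.irrefl (he ▸ h)
    omega
  have xyadj : ∀ i ≤ K+2, ∀ j ≤ K+2, G.Adj (x i) (y j) →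
      (i = j ∧ i < K+2) ∨ (i = K+2 ∧ j + 1 = K+2) ∨ (i + 1 = K+2 ∧ j = K+2) := by
    intro i hi j hj h
    have h1 := hb (x 0) _ _ h
    have h2 := hb (x 0) _ _ h.symm
    rw [hdx i hi, hdxy j hj] at h1 h2
    have h3 := hb (y 0) _ _ h
    have h4 := hb (y 0) _ _ h.symm
    rw [hdyx i hi, hdy j hj] at h3 h4
    have hne : ¬(i = K+2 ∧ j = K+2) := by
      rintro ⟨rfl, rfl⟩
      rw [htop] at h
      exact G.irrefl h
    split_ifs at h1 h2 h3 h4 <;> omega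
  -- the rung claim
  have rung : ∀ i ≤ K+1, G.Adj (x i) (y i) := by
    intro i
    induction i with
    | zero => exact fun _ => hxy0
    | succ i ih =>
      intro hik
      have hri : G.Adj (x i) (y i) := ih (by omega)
      by_contra hnext
      have hex : ∃ l, i < l ∧ (l = K+2 ∨ G.Adj (x l) (y l)) := ⟨K+2, by omega, Or.inl rfl⟩
      set j := Nat.find hex with hjdef
      have hj : i < j ∧ (j = K+2 ∨ G.Adj (x j) (y j)) := Nat.find_spec hex
      have hjmin : ∀ l, l < j → ¬(i < l ∧ (l = K+2 ∨ G.Adj (x l) (y l))) :=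
        fun l hl => Nat.find_min hex hl
      have hjk : j ≤ K+2 := Nat.find_le ⟨by omega, Or.inl rfl⟩
      have hij2 : i + 2 ≤ j := by
        by_contra hcon
        have hji : j = i + 1 := by omega
        rcases hj.2 with h | h
        · omega
        · rw [hji] at h; exact hnext h
      set a := j - i with hadef
      have haj : i + a = j := by omega
      have ha2 : 2 ≤ a := by omega
      obtain ⟨b, hb1, hb2, hb3, hbk, hbadj, hbtop⟩ :
          ∃ b, 1 ≤ b ∧ b ≤ a ∧ a ≤ b + 1 ∧ i + b < K+2 ∧
            G.Adj (x (i+a)) (y (i+b)) ∧ (i + a = K+2 → b + 1 = a) := by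
        rcases eq_or_lt_of_le hjk with hjk' | hjk'
        · refine ⟨a - 1, by omega, by omega, by omega, by omega, ?_, fun _ => by omega⟩
          have h1 : i + a = K+2 := by omega
          have h2 : i + (a-1) + 1 = K+2 := by omega
          rw [h1, htop]
          have h3 := hya (i + (a-1)) (by omega)
          rw [h2] at h3
          exact h3.symm
        · have hadjj : G.Adj (x j) (y j) := (hj.2).resolve_left (by omega)
          refine ⟨a, by omega, le_refl _, by omega, by omega, ?_, fun h => by omega⟩
          rw [haj]; exact hadjj
      set f : ℕ → V := fun t => if t ≤ a then x (i + t) else y (i + (a+b+1-t)) with hf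
      have hfx : ∀ t, t ≤ a → f t = x (i + t) := by
        intro t ht; simp only [hf]; rw [if_pos ht]
      have hfy : ∀ t, a < t → f t = y (i + (a+b+1-t)) := by
        intro t ht; simp only [hf]; rw [if_neg (by omega)]
      have hinj : ∀ s, s < a+b+2 → ∀ t, t < a+b+2 → f s = f t → s = t := by
        intro s hs t ht heq
        rcases le_or_gt s a with hsa | hsa <;> rcases le_or_gt t a with hta | hta
        · rw [hfx s hsa, hfx t hta] at heq
          have := xinj (i+s) (by omega) (i+t) (by omega) heq
          omega
        · rw [hfx s hsa, hfy t hta] at heq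
          have := xyne (i+s) (by omega) (i + (a+b+1-t)) (by omega) heq
          omega
        · rw [hfy s hsa, hfx t hta] at heq
          have := xyne (i+t) (by omega) (i + (a+b+1-s)) (by omega) heq.symm
          omega
        · rw [hfy s hsa, hfy t hta] at heq
          have := yinj (i + (a+b+1-s)) (by omega) (i + (a+b+1-t)) (by omega) heq
          omega
      have hadj : ∀ t, t + 1 < a+b+2 → G.Adj (f t) (f (t+1)) := by
        intro t htn
        rcases lt_or_ge t a with hta | hta
        · rw [hfx t (by omega), hfx (t+1) (by omega)]
          have h := hxa (i+t) (by omega)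
          have he : i + (t+1) = i + t + 1 := by omega
          rw [he]
          exact h
        · rcases eq_or_lt_of_le hta with heq | tgta
          · subst heq
            rw [hfx a le_rfl, hfy (a+1) (by omega)]
            have he : i + (a+b+1-(a+1)) = i + b := by omega
            rw [he]
            exact hbadj
          · rw [hfy t (by omega), hfy (t+1) (by omega)]
            have h := hya (i + (a+b+1-(t+1))) (by omega)
            have he : i + (a+b+1-(t+1)) + 1 = i + (a+b+1-t) := by omega
            rw [← he]
            exact h.symm
      have hwrap : G.Adj (f (a+b+1)) (f 0) := by
        rw [hfy (a+b+1) (by omega), hfx 0 (by omega)]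
        have h1 : i + (a+b+1-(a+b+1)) = i := by omega
        have h2 : i + 0 = i := rfl
        rw [h1, h2]
        exact hri.symm
      have hconv : ∀ s t, s < t → t < a+b+2 → G.Adj (f s) (f t) →
          t = s + 1 ∨ (s = 0 ∧ t = a+b+1) := by
        intro s t hst htn hadj'
        rcases le_or_gt s a with hsa | hsa
        · rcases le_or_gt t a with hta | hta
          · rw [hfx s hsa, hfx t hta] at hadj'
            have := xnadj (i+s) (by omega) (i+t) (by omega) hadj'
            omega
          · rw [hfx s hsa, hfy t hta] at hadj'
            have hcr := xyadj (i+s) (by omega) (i + (a+b+1-t)) (by omega) hadj'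
            rcases hcr with ⟨hc1, hc2⟩ | ⟨hc1, hc2⟩ | ⟨hc1, hc2⟩
            · rcases Nat.eq_zero_or_pos s with rfl | hs0
              · right; exact ⟨rfl, by omega⟩
              · left
                by_contra hne'
                have hsa' : s < a := by
                  rcases eq_or_lt_of_le hsa with rfl | h'
                  · exfalso; apply hne'; omega
                  · exact h'
                exact hjmin (i+s) (by omega) ⟨by omega, Or.inr (by rw [← hc1] at hadj'; exact hadj')⟩
            · left; have hba := hbtop (by omega); omega
            · exfalso; omega
        · rw [hfy s hsa, hfy t (by omega)] at hadj'
          have := ynadj (i + (a+b+1-s)) (by omega) (i + (a+b+1-t)) (by omega) hadj'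
          left; omega
      obtain ⟨emb⟩ := cycle_embed G (a+b) f hinj hadj hwrap hconv
      exact (hH.2 (a+b+2) (by omega)).false emb
  -- now the house
  have e1 : G.Adj (x (K+2)) (x (K+1)) := (hxa (K+1) (by omega)).symm
  have e2 : G.Adj (x (K+1)) (x K) := (hxa K (by omega)).symm
  have e3 : G.Adj (x K) (y K) := rung K (by omega)
  have e4 : G.Adj (y K) (y (K+1)) := hya K (by omega)
  have e5 : G.Adj (y (K+1)) (x (K+2)) := by
    rw [htop]; exact hya (K+1) (by omega)
  have e6 : G.Adj (x (K+1)) (y (K+1)) := rung (K+1) le_rfl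
  have hn1 : ¬ G.Adj (x (K+2)) (x K) := by
    intro h
    have := xnadj (K+2) le_rfl K (by omega) h
    omega
  have hn2 : ¬ G.Adj (x (K+2)) (y K) := by
    intro h
    have := xyadj (K+2) le_rfl K (by omega) h
    omega
  have hn3 : ¬ G.Adj (x (K+1)) (y K) := by
    intro h
    have := xyadj (K+1) (by omega) K (by omega) h
    omega
  have hn4 : ¬ G.Adj (x K) (y (K+1)) := by
    intro h
    have := xyadj K (by omega) (K+1) (by omega) h
    omega
  have d1 : x (K+2) ≠ x (K+1) := fun h => by have := xinj (K+2) le_rfl (K+1) (by omega) h; omega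
  have d2 : x (K+2) ≠ x K := fun h => by have := xinj (K+2) le_rfl K (by omega) h; omega
  have d3 : x (K+1) ≠ x K := fun h => by have := xinj (K+1) (by omega) K (by omega) h; omega
  have d4 : y K ≠ y (K+1) := fun h => by have := yinj K (by omega) (K+1) (by omega) h; omega
  have d5 : x (K+2) ≠ y K := fun h => by have := xyne (K+2) le_rfl K (by omega) h; omega
  have d6 : x (K+2) ≠ y (K+1) := fun h => by have := xyne (K+2) le_rfl (K+1) (by omega) h; omega
  have d7 : x (K+1) ≠ y K := fun h => by have := xyne (K+1) (by omega) K (by omega) h; omega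
  have d8 : x (K+1) ≠ y (K+1) := fun h => by have := xyne (K+1) (by omega) (K+1) (by omega) h; omega
  have d9 : x K ≠ y K := fun h => by have := xyne K (by omega) K (by omega) h; omega
  have d10 : x K ≠ y (K+1) := fun h => by have := xyne K (by omega) (K+1) (by omega) h; omega
  let g : Fin 5 → V := ![x (K+2), x (K+1), x K, y K, y (K+1)]
  have hemb : house ↪g G := by
    refine ⟨⟨g, ?_⟩, ?_⟩
    · intro s t hst
      fin_cases s <;> fin_cases t <;>
        simp only [g, Matrix.cons_val_zero, Matrix.cons_val_one, Matrix.head_cons,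
          Matrix.cons_val_two, Matrix.tail_cons, Matrix.cons_val_three,
          Matrix.cons_val_four, Matrix.head_fin_const] at hst <;>
        first
          | rfl
          | exact absurd hst d1 | exact absurd hst d1.symm
          | exact absurd hst d2 | exact absurd hst d2.symm
          | exact absurd hst d3 | exact absurd hst d3.symm
          | exact absurd hst d4 | exact absurd hst d4.symm
          | exact absurd hst d5 | exact absurd hst d5.symm
          | exact absurd hst d6 | exact absurd hst d6.symm
          | exact absurd hst d7 | exact absurd hst d7.symm
          | exact absurd hst d8 | exact absurd hst d8.symm
          | exact absurd hst d9 | exact absurd hst d9.symm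
          | exact absurd hst d10 | exact absurd hst d10.symm
    · intro s t
      fin_cases s <;> fin_cases t <;>
        simp only [g, Function.Embedding.coeFn_mk, Matrix.cons_val_zero, Matrix.cons_val_one,
          Matrix.head_cons, Matrix.cons_val_two, Matrix.tail_cons, Matrix.cons_val_three,
          Matrix.cons_val_four, Matrix.head_fin_const] <;>
        rw [house_adj_explicit] <;>
        first
          | (refine iff_of_true ?_ (by decide)) <;>
              first
                | exact e1 | exact e1.symm | exact e2 | exact e2.symm | exact e3
                | exact e3.symm | exact e4 | exact e4.symm | exact e5 | exact e5.symm
                | exact e6 | exact e6.symm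
          | (refine iff_of_false ?_ (by decide)) <;>
              first
                | exact G.irrefl
                | exact hn1 | exact fun h => hn1 h.symm
                | exact hn2 | exact fun h => hn2 h.symm
                | exact hn3 | exact fun h => hn3 h.symm
                | exact hn4 | exact fun h => hn4 h.symm
  exact hH.1.false hemb
lemma no_equidistant (G : SimpleGraph V) (hG : G.Connected) (hH : HHFree G)
    {u v : V} (huv : G.Adj u v) (htri : ∀ w : V, G.Adj u w → G.Adj v w → False) :
    ∀ z : V, G.dist u z ≠ G.dist v z := by
  have hb : ∀ (w a b : V), G.Adj a b → G.dist w a ≤ G.dist w b + 1 := by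
    intro w a b h
    have h1 : G.dist w a ≤ G.dist w b + G.dist b a := hG.dist_triangle
    have h2 : G.dist b a = 1 := dist_eq_one_iff_adj.mpr h.symm
    omega
  suffices H : ∀ k : ℕ, ∀ z : V, G.dist u z = k → G.dist v z = k → False by
    intro z h
    exact H (G.dist u z) z rfl h.symm
  intro k
  induction k using Nat.strong_induction_on with
  | _ k IH =>
    intro z hduz hdvz
    match k, hduz, hdvz with
    | 0, hduz, hdvz =>
      have h1 : u = z := hG.dist_eq_zero_iff.mp hduz
      have h2 : v = z := hG.dist_eq_zero_iff.mp hdvz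
      exact G.ne_of_adj huv (h1.trans h2.symm)
    | 1, hduz, hdvz =>
      exact htri z (dist_eq_one_iff_adj.mp hduz) (dist_eq_one_iff_adj.mp hdvz)
    | (K+2), hduz, hdvz =>
      obtain ⟨p, hp⟩ := hG.exists_walk_length_eq_dist u z
      obtain ⟨q, hq⟩ := hG.exists_walk_length_eq_dist v z
      rw [hduz] at hp
      rw [hdvz] at hq
      set x : ℕ → V := p.getVert with hx
      set y : ℕ → V := q.getVert with hy
      have hx0 : x 0 = u := p.getVert_zero
      have hy0 : y 0 = v := q.getVert_zero
      have hxk : x (K+2) = z := by rw [hx, ← hp]; exact p.getVert_length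
      have hyk : y (K+2) = z := by rw [hy, ← hq]; exact q.getVert_length
      have hxa : ∀ i < K+2, G.Adj (x i) (x (i+1)) :=
        fun i hi => p.adj_getVert_succ (by omega)
      have hya : ∀ i < K+2, G.Adj (y i) (y (i+1)) :=
        fun i hi => q.adj_getVert_succ (by omega)
      -- prefix distance bounds
      have hxle : ∀ i ≤ K+2, G.dist u (x i) ≤ i := by
        intro i
        induction i with
        | zero => intro _; rw [hx0]; simp
        | succ i ih =>
          intro hi
          have h1 := hb u _ _ (hxa i (by omega)).symm
          have h2 := ih (by omega)
          omega
      have hyle : ∀ i ≤ K+2, G.dist v (y i) ≤ i := by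
        intro i
        induction i with
        | zero => intro _; rw [hy0]; simp
        | succ i ih =>
          intro hi
          have h1 := hb v _ _ (hya i (by omega)).symm
          have h2 := ih (by omega)
          omega
      -- suffix distance bounds
      have hxz : ∀ d, ∀ i, i + d = K+2 → G.dist (x i) z ≤ d := by
        intro d
        induction d with
        | zero => intro i hi; have : x i = z := by rw [show i = K+2 by omega]; exact hxk
                  rw [this]; simp
        | succ d ih =>
          intro i hi
          have h1 : G.dist (x i) z ≤ G.dist (x i) (x (i+1)) + G.dist (x (i+1)) z :=
            hG.dist_triangle
          have h2 : G.dist (x i) (x (i+1)) = 1 := dist_eq_one_iff_adj.mpr (hxa i (by omega))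
          have h3 := ih (i+1) (by omega)
          omega
      have hyz : ∀ d, ∀ i, i + d = K+2 → G.dist (y i) z ≤ d := by
        intro d
        induction d with
        | zero => intro i hi; have : y i = z := by rw [show i = K+2 by omega]; exact hyk
                  rw [this]; simp
        | succ d ih =>
          intro i hi
          have h1 : G.dist (y i) z ≤ G.dist (y i) (y (i+1)) + G.dist (y (i+1)) z :=
            hG.dist_triangle
          have h2 : G.dist (y i) (y (i+1)) = 1 := dist_eq_one_iff_adj.mpr (hya i (by omega))
          have h3 := ih (i+1) (by omega)
          omega
      have hdx : ∀ i ≤ K+2, G.dist u (x i) = i := by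
        intro i hi
        have h1 : G.dist u z ≤ G.dist u (x i) + G.dist (x i) z := hG.dist_triangle
        have h2 := hxz (K+2-i) i (by omega)
        have h3 := hxle i hi
        omega
      have hdy : ∀ i ≤ K+2, G.dist v (y i) = i := by
        intro i hi
        have h1 : G.dist v z ≤ G.dist v (y i) + G.dist (y i) z := hG.dist_triangle
        have h2 := hyz (K+2-i) i (by omega)
        have h3 := hyle i hi
        omega
      have hduv : G.dist v u = 1 := dist_eq_one_iff_adj.mpr huv.symm
      have hdvx : ∀ i < K+2, G.dist v (x i) = i + 1 := by
        intro i hi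
        have h1 : G.dist v (x i) ≤ G.dist v u + G.dist u (x i) := hG.dist_triangle
        rw [hduv, hdx i (by omega)] at h1
        have h2 : G.dist v z ≤ G.dist v (x i) + G.dist (x i) z := hG.dist_triangle
        have h3 := hxz (K+2-i) i (by omega)
        have h4 : G.dist v (x i) ≠ i := fun he => IH i hi (x i) (hdx i (by omega)) he
        omega
      have hduy : ∀ i < K+2, G.dist u (y i) = i + 1 := by
        intro i hi
        have h1 : G.dist u (y i) ≤ G.dist u v + G.dist v (y i) := hG.dist_triangle
        rw [dist_eq_one_iff_adj.mpr huv, hdy i (by omega)] at h1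
        have h2 : G.dist u z ≤ G.dist u (y i) + G.dist (y i) z := hG.dist_triangle
        have h3 := hyz (K+2-i) i (by omega)
        have h4 : G.dist u (y i) ≠ i := fun he => IH i hi (y i) he (hdy i (by omega))
        omega
      apply core G hG hH K x y hxa hya (hxk.trans hyk.symm)
      · intro i hi; rw [hx0]; exact hdx i hi
      · intro i hi; rw [hy0]; exact hdy i hi
      · intro i hi; rw [hy0]; exact hdvx i hi
      · intro i hi; rw [hx0]; exact hduy i hi
      · rw [hx0, hy0]; exact huv

theorem stmt16 (G : SimpleGraph V) (hG : G.Connected) (hH : HHFree G)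
    (hNoUnivEdge : ∀ a b : V, G.Adj a b → line G a b ≠ Set.univ) :
    ∀ u v : V, G.Adj u v → ∃ w : V, G.Adj u w ∧ G.Adj v w := by
  intro u v huv
  by_contra hno
  have htri : ∀ w : V, G.Adj u w → G.Adj v w → False := fun w h1 h2 => hno ⟨w, h1, h2⟩
  have hne := no_equidistant G hG hH huv htri
  apply hNoUnivEdge u v huv
  ext z
  simp only [Set.mem_univ, iff_true, line, interval, Set.mem_setOf_eq]
  have h1 : G.dist u v = 1 := dist_eq_one_iff_adj.mpr huv
  have hb1 : G.dist u z ≤ G.dist u v + G.dist v z := hG.dist_triangle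
  have hb2 : G.dist v z ≤ G.dist v u + G.dist u z := hG.dist_triangle
  have h2 : G.dist v u = 1 := dist_eq_one_iff_adj.mpr huv.symm
  have hz := hne z
  have e1 : G.dist z v = G.dist v z := dist_comm
  have e2 : G.dist z u = G.dist u z := dist_comm
  omega
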